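/- If X̃₁ and X̃₂ are strong fuzzy incidence graphs, then their Cartesian product X̃ = X̃₁ × X̃₂ is a strong fuzzy incidence graph. -/

import Mathlib

open scoped BigOperators

/-- A fuzzy incidence graph on a finite vertex type `V`.  An (undirected, loopless) edge `xy`
is encoded by the symmetric membership function `rho`, and the incidence pair `(x, xy)`
is encoded by `eta x y` (so `eta x y` is the membership value of the pair consisting of the
vertex `x` and the edge joining `x` and `y`). All membership values lie in `[0,1]`,
`rho xy ≤ min (eps x) (eps y)` and `eta (x, xy) ≤ min (eps x) (rho xy)`. -/
structure FIG (V : Type) [Fintype V] [DecidableEq V] where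
  eps : V → ℝ
  rho : V → V → ℝ
  eta : V → V → ℝ
  eps_nonneg : ∀ x, 0 ≤ eps x
  eps_le_one : ∀ x, eps x ≤ 1
  rho_nonneg : ∀ x y, 0 ≤ rho x y
  rho_symm : ∀ x y, rho x y = rho y x
  rho_le : ∀ x y, rho x y ≤ min (eps x) (eps y)
  rho_irrefl : ∀ x, rho x x = 0
  eta_nonneg : ∀ x y, 0 ≤ eta x y
  eta_le : ∀ x y, eta x y ≤ min (eps x) (rho x y)

namespace FIG

variable {V V₁ V₂ : Type} [Fintype V] [DecidableEq V]
  [Fintype V₁] [DecidableEq V₁] [Fintype V₂] [DecidableEq V₂]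

/-- `(x, xy)` is a pair of the fuzzy incidence graph (i.e. belongs to the support `η*`). -/
def IsPair (G : FIG V) (x y : V) : Prop := 0 < G.eta x y

/-- the minimum of the two pair weights along one edge step of an incidence path -/
def pairMin (G : FIG V) (a b : V) : ℝ := min (G.eta a b) (G.eta b a)

/-- the minimum of the pair weights along the internal steps of a vertex list -/
def chainStrength (G : FIG V) : List V → ℝ
  | [] => 1
  | [_] => 1
  | a :: b :: l => min (G.pairMin a b) (G.chainStrength (b :: l))

/-- The set of incidence strengths of incidence paths from the vertex `x` to the edge `yz`:
a path is recorded by its (pairwise distinct) sequence of vertices, starting at `x` and ending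
at an endpoint of the edge `yz`; its strength is the minimum of the weights of its pairs
(pairs of weight `0` are not genuine pairs, but a list using them has strength `0`, so
including such lists does not alter the supremum below). -/
def pathStrengths (G : FIG V) (x y z : V) : Set ℝ :=
  {s | ∃ l : List V, l.Nodup ∧ l.head? = some x ∧
      ((l.getLast? = some y ∧ s = min (G.chainStrength l) (G.eta y z)) ∨
       (l.getLast? = some z ∧ s = min (G.chainStrength l) (G.eta z y)))}

/-- `ICONN G x y z` is the greatest incidence strength of an incidence path from the
vertex `x` to the edge `yz` (the incidence connectivity `ICONN_G (x, yz)`). -/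
noncomputable def ICONN (G : FIG V) (x y z : V) : ℝ := sSup (G.pathStrengths x y z)

/-- the fuzzy incidence graph obtained by deleting the pair `(a, ab)` -/
def deletePair (G : FIG V) (a b : V) : FIG V where
  eps := G.eps
  rho := G.rho
  eta := fun u v => if u = a ∧ v = b then 0 else G.eta u v
  eps_nonneg := G.eps_nonneg
  eps_le_one := G.eps_le_one
  rho_nonneg := G.rho_nonneg
  rho_symm := G.rho_symm
  rho_le := G.rho_le
  rho_irrefl := G.rho_irrefl
  eta_nonneg := by
    intro u v; split
    · exact le_refl 0
    · exact G.eta_nonneg u v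
  eta_le := by
    intro u v; split
    · exact le_min (G.eps_nonneg u) (G.rho_nonneg u v)
    · exact G.eta_le u v

/-- The pair `(x, xy)` is strong: its weight is at least the incidence connectivity
between `x` and the edge `xy` in the graph obtained by deleting the pair `(x, xy)`. -/
def IsStrongPair (G : FIG V) (x y : V) : Prop :=
  (G.deletePair x y).ICONN x x y ≤ G.eta x y

/-- a strong fuzzy incidence graph: every pair is strong -/
def Strong (G : FIG V) : Prop := ∀ x y, G.IsPair x y → G.IsStrongPair x y

/-- The pair `(x, xy)` is effective: `η(x, xy) = min (ε x) (ρ xy)`. -/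
def EffectivePair (G : FIG V) (x y : V) : Prop :=
  G.eta x y = min (G.eps x) (G.rho x y)

/-- a fuzzy incidence graph in which every pair is effective -/
def EffectivePairs (G : FIG V) : Prop := ∀ x y, G.IsPair x y → G.EffectivePair x y

/-- The Cartesian product of two fuzzy incidence graphs: `(a₁,b₁)(a₂,b₂)` is an edge
when `a₁ = a₂` and `b₁b₂ ∈ E₂`, or `b₁ = b₂` and `a₁a₂ ∈ E₁`; a pair of the product
exists when both corresponding pairs of the factor exist. -/
noncomputable def cartesian (G₁ : FIG V₁) (G₂ : FIG V₂) : FIG (V₁ × V₂) where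
  eps := fun p => min (G₁.eps p.1) (G₂.eps p.2)
  rho := fun p q =>
    if p.1 = q.1 then min (G₁.eps p.1) (G₂.rho p.2 q.2)
    else if p.2 = q.2 then min (G₁.rho p.1 q.1) (G₂.eps p.2)
    else 0
  eta := fun p q =>
    if p.1 = q.1 then
      (if 0 < G₂.eta p.2 q.2 ∧ 0 < G₂.eta q.2 p.2 then
        min (G₁.eps p.1) (G₂.eta p.2 q.2) else 0)
    else if p.2 = q.2 then
      (if 0 < G₁.eta p.1 q.1 ∧ 0 < G₁.eta q.1 p.1 then
        min (G₁.eta p.1 q.1) (G₂.eps p.2) else 0)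
    else 0
  eps_nonneg := fun p => le_min (G₁.eps_nonneg p.1) (G₂.eps_nonneg p.2)
  eps_le_one := fun p => min_le_of_left_le (G₁.eps_le_one p.1)
  rho_nonneg := by
    intro p q; split
    · exact le_min (G₁.eps_nonneg _) (G₂.rho_nonneg _ _)
    · split
      · exact le_min (G₁.rho_nonneg _ _) (G₂.eps_nonneg _)
      · exact le_refl 0
  rho_symm := by
    intro p q; try dsimp only
    by_cases h1 : p.1 = q.1
    · simp [h1, G₂.rho_symm p.2 q.2]
    · by_cases h2 : p.2 = q.2
      · simp [h1, Ne.symm h1, h2, G₁.rho_symm p.1 q.1]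
      · simp [h1, Ne.symm h1, h2, Ne.symm h2]
  rho_le := by
    intro p q; split
    · rename_i h1
      refine le_min (le_min (min_le_left _ _) (min_le_of_right_le ?_))
        (le_min (h1 ▸ min_le_left _ _) (min_le_of_right_le ?_))
      · exact le_trans (G₂.rho_le p.2 q.2) (min_le_left _ _)
      · exact le_trans (G₂.rho_le p.2 q.2) (min_le_right _ _)
    · split
      · rename_i h1 h2
        refine le_min (le_min (min_le_of_left_le ?_) (min_le_right _ _))
          (le_min (min_le_of_left_le ?_) (h2 ▸ min_le_right _ _))
        · exact le_trans (G₁.rho_le p.1 q.1) (min_le_left _ _)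
        · exact le_trans (G₁.rho_le p.1 q.1) (min_le_right _ _)
      · exact le_min (le_min (G₁.eps_nonneg _) (G₂.eps_nonneg _))
          (le_min (G₁.eps_nonneg _) (G₂.eps_nonneg _))
  rho_irrefl := by
    intro p; try dsimp only
    rw [if_pos rfl, G₂.rho_irrefl]
    exact min_eq_right (G₁.eps_nonneg p.1)
  eta_nonneg := by
    intro p q; split
    · split
      · exact le_min (G₁.eps_nonneg _) (G₂.eta_nonneg _ _)
      · exact le_refl 0
    · split
      · split
        · exact le_min (G₁.eta_nonneg _ _) (G₂.eps_nonneg _)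
        · exact le_refl 0
      · exact le_refl 0
  eta_le := by
    intro p q; split
    · split
      · refine le_min (le_min (min_le_left _ _) (min_le_of_right_le ?_))
          (le_min (min_le_left _ _) (min_le_of_right_le ?_))
        · exact le_trans (G₂.eta_le p.2 q.2) (min_le_left _ _)
        · exact le_trans (G₂.eta_le p.2 q.2) (min_le_right _ _)
      · exact le_min (le_min (G₁.eps_nonneg _) (G₂.eps_nonneg _))
          (le_min (G₁.eps_nonneg _) (G₂.rho_nonneg _ _))
    · split
      · split
        · refine le_min (le_min (min_le_of_left_le ?_) (min_le_right _ _))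
            (le_min (min_le_of_left_le ?_) (min_le_right _ _))
          · exact le_trans (G₁.eta_le p.1 q.1) (min_le_left _ _)
          · exact le_trans (G₁.eta_le p.1 q.1) (min_le_right _ _)
        · exact le_min (le_min (G₁.eps_nonneg _) (G₂.eps_nonneg _))
            (le_min (G₁.rho_nonneg _ _) (G₂.eps_nonneg _))
      · exact le_min (le_min (G₁.eps_nonneg _) (G₂.eps_nonneg _)) (le_refl 0)

/-! ### Auxiliary lemmas -/

lemma eta_self (G : FIG V) (x : V) : G.eta x x = 0 := by
  have h := G.eta_le x x
  rw [G.rho_irrefl] at h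
  exact le_antisymm (h.trans (min_le_right _ _)) (G.eta_nonneg x x)

lemma pairMin_le_one (G : FIG V) (a b : V) : G.pairMin a b ≤ 1 :=
  (min_le_left _ _).trans ((G.eta_le a b).trans ((min_le_left _ _).trans (G.eps_le_one a)))

lemma chainStrength_le_one (G : FIG V) : ∀ l : List V, G.chainStrength l ≤ 1
  | [] => le_refl 1
  | [_] => le_refl 1
  | _ :: b :: l =>
    (min_le_right _ _).trans (chainStrength_le_one G (b :: l))

lemma chainStrength_cons_cons (G : FIG V) (a b : V) (l : List V) :
    G.chainStrength (a :: b :: l) = min (G.pairMin a b) (G.chainStrength (b :: l)) := rfl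

/-- the chain strength is at most the weight of each consecutive step -/
lemma chainStrength_le_step (G : FIG V) :
    ∀ l : List V, ∀ p ∈ l.zip l.tail, G.chainStrength l ≤ G.pairMin p.1 p.2
  | [] => by simp
  | [_] => by simp
  | a :: b :: l => by
    intro p hp
    rw [List.tail_cons, List.zip_cons_cons] at hp
    rcases List.mem_cons.mp hp with rfl | hp
    · exact min_le_left _ _
    · exact (min_le_right _ _).trans (chainStrength_le_step G (b :: l) p hp)

/-- if every step of `m` is a step of `l` then the chain strength of `l` is at most that
of `m` -/
lemma chainStrength_le_of_steps (G : FIG V) (l : List V) :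
    ∀ m : List V, (∀ p ∈ m.zip m.tail, p ∈ l.zip l.tail) →
      G.chainStrength l ≤ G.chainStrength m
  | [], _ => chainStrength_le_one G l
  | [_], _ => chainStrength_le_one G l
  | a :: b :: m, h => by
    rw [chainStrength_cons_cons]
    refine le_min (chainStrength_le_step G l (a, b) ?_)
      (chainStrength_le_of_steps G l (b :: m) ?_)
    · exact h (a, b) (by rw [List.tail_cons, List.zip_cons_cons]; exact List.mem_cons_self)
    · intro p hp
      refine h p ?_
      rw [List.tail_cons, List.zip_cons_cons]
      exact List.mem_cons_of_mem _ hp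

lemma steps_cons {r : List V} (c : V) :
    ∀ p ∈ r.zip r.tail, p ∈ (c :: r).zip (c :: r).tail := by
  cases r with
  | nil => simp
  | cons d r' =>
    intro p hp
    rw [List.tail_cons, List.zip_cons_cons]
    exact List.mem_cons_of_mem _ hp

lemma steps_suffix {l m : List V} (h : m <:+ l) :
    ∀ p ∈ m.zip m.tail, p ∈ l.zip l.tail := by
  obtain ⟨w, rfl⟩ := h
  induction w with
  | nil => exact fun p hp => hp
  | cons c w ih =>
    intro p hp
    exact steps_cons c p (ih p hp)

/-- loop erasure: every walk contains a path with the same endpoints whose steps are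
steps of the walk -/
lemma loop_erase_aux : ∀ n : ℕ, ∀ l : List V, l.length ≤ n →
    ∃ m : List V, m.Nodup ∧ m.head? = l.head? ∧ m.getLast? = l.getLast? ∧
      (∀ v ∈ m, v ∈ l) ∧ (∀ p ∈ m.zip m.tail, p ∈ l.zip l.tail)
  | 0, l, hl => by
    rw [List.length_eq_zero_iff.mp (Nat.le_zero.mp hl)]
    exact ⟨[], by simp⟩
  | n + 1, [], _ => ⟨[], by simp⟩
  | n + 1, a :: t, hl => by
    by_cases ha : a ∈ t
    · obtain ⟨u, v, rfl⟩ := List.append_of_mem ha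
      have hsuf : (a :: v) <:+ (a :: (u ++ a :: v)) := ⟨a :: u, rfl⟩
      have hlen : (a :: v).length ≤ n := by
        simp only [List.length_cons, List.length_append, Nat.add_le_add_iff_right] at hl ⊢
        omega
      obtain ⟨m, h1, h2, h3, h4, h5⟩ := loop_erase_aux n (a :: v) hlen
      refine ⟨m, h1, by rw [h2]; rfl, ?_, fun x hx => hsuf.subset (h4 x hx),
        fun p hp => steps_suffix hsuf p (h5 p hp)⟩
      rw [h3, show a :: (u ++ a :: v) = (a :: u) ++ (a :: v) from rfl,
        List.getLast?_append]
      cases hv : (a :: v).getLast? with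
      | none => simp at hv
      | some x => rfl
    · have hlen : t.length ≤ n := Nat.succ_le_succ_iff.mp hl
      obtain ⟨m, h1, h2, h3, h4, h5⟩ := loop_erase_aux n t hlen
      cases t with
      | nil => exact ⟨[a], by simp⟩
      | cons b t' =>
        obtain ⟨m', rfl⟩ : ∃ m', m = b :: m' := by
          cases m with
          | nil => simp at h2
          | cons c m' =>
            simp only [List.head?_cons, Option.some.injEq] at h2
            exact ⟨m', by rw [h2]⟩
        have ham : a ∉ b :: m' := fun h => ha (h4 a h)
        refine ⟨a :: b :: m', List.nodup_cons.mpr ⟨ham, h1⟩, rfl, ?_, ?_, ?_⟩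
        · rw [List.getLast?_cons_cons, List.getLast?_cons_cons, h3]
        · intro x hx
          rcases List.mem_cons.mp hx with rfl | hx
          · exact List.mem_cons_self
          · exact List.mem_cons_of_mem _ (h4 x hx)
        · intro p hp
          rw [List.tail_cons, List.zip_cons_cons] at hp
          rcases List.mem_cons.mp hp with rfl | hp
          · rw [List.tail_cons, List.zip_cons_cons]
            exact List.mem_cons_self
          · exact steps_cons a p (h5 p hp)

lemma loop_erase (l : List V) :
    ∃ m : List V, m.Nodup ∧ m.head? = l.head? ∧ m.getLast? = l.getLast? ∧
      (∀ p ∈ m.zip m.tail, p ∈ l.zip l.tail) := by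
  obtain ⟨m, h1, h2, h3, _, h5⟩ := loop_erase_aux l.length l le_rfl
  exact ⟨m, h1, h2, h3, h5⟩

lemma chainStrength_congr (G G' : FIG V) :
    ∀ l : List V, (∀ p ∈ l.zip l.tail, G'.pairMin p.1 p.2 = G.pairMin p.1 p.2) →
      G'.chainStrength l = G.chainStrength l
  | [], _ => rfl
  | [_], _ => rfl
  | a :: b :: l, h => by
    rw [chainStrength_cons_cons, chainStrength_cons_cons,
      h (a, b) (by rw [List.tail_cons, List.zip_cons_cons]; exact List.mem_cons_self),
      chainStrength_congr G G' (b :: l) (fun p hp => h p (by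
        rw [List.tail_cons, List.zip_cons_cons]; exact List.mem_cons_of_mem _ hp))]

lemma chainStrength_mono {G G' : FIG V} (h : ∀ u v, G'.eta u v ≤ G.eta u v) :
    ∀ l : List V, G'.chainStrength l ≤ G.chainStrength l
  | [] => le_refl 1
  | [_] => le_refl 1
  | a :: b :: l => by
    rw [chainStrength_cons_cons, chainStrength_cons_cons]
    exact min_le_min (min_le_min (h a b) (h b a)) (chainStrength_mono h (b :: l))

lemma pathStrengths_bddAbove (G : FIG V) (x y z : V) :
    BddAbove (G.pathStrengths x y z) := by
  refine ⟨1, ?_⟩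
  rintro s ⟨l, -, -, (⟨-, rfl⟩ | ⟨-, rfl⟩)⟩ <;>
    exact (min_le_left _ _).trans (chainStrength_le_one G l)

lemma deletePair_eta (G : FIG V) (a b u v : V) :
    (G.deletePair a b).eta u v = if u = a ∧ v = b then 0 else G.eta u v := rfl

lemma deletePair_eta_le (G : FIG V) (a b u v : V) :
    (G.deletePair a b).eta u v ≤ G.eta u v := by
  rw [deletePair_eta]
  split
  · exact G.eta_nonneg u v
  · exact le_refl _

/-- **Key factor lemma.** In a strong fuzzy incidence graph, any walk from `x` to `y`
together with the final pair `(y, yx)` has strength at most `η (x, xy)`. -/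
lemma strength_le_eta (G : FIG V) (hG : G.Strong) {x y : V} (hpos : 0 < G.eta x y)
    {l : List V} (hh : l.head? = some x) (hl : l.getLast? = some y) :
    min (G.chainStrength l) (G.eta y x) ≤ G.eta x y := by
  have hxy : x ≠ y := by
    rintro rfl
    rw [eta_self] at hpos
    exact lt_irrefl 0 hpos
  obtain ⟨m, hnd, hmh, hml, hsteps⟩ := loop_erase l
  have hchain : G.chainStrength l ≤ G.chainStrength m :=
    chainStrength_le_of_steps G l m hsteps
  rw [hh] at hmh
  rw [hl] at hml
  obtain ⟨r, rfl⟩ : ∃ r, m = x :: r := by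
    cases m with
    | nil => simp at hmh
    | cons c r =>
      simp only [List.head?_cons, Option.some.injEq] at hmh
      exact ⟨r, by rw [hmh]⟩
  have hxnr : x ∉ r := (List.nodup_cons.mp hnd).1
  cases r with
  | nil =>
    simp only [List.getLast?_singleton, Option.some.injEq] at hml
    exact absurd hml hxy
  | cons b r' =>
    by_cases hby : b = y
    · subst hby
      -- then necessarily m = [x, y]
      have hyr' : b ∉ r' := (List.nodup_cons.mp (List.nodup_cons.mp hnd).2).1
      have hr' : r' = [] := by
        cases r' with
        | nil => rfl
        | cons c r'' =>
          rw [List.getLast?_cons_cons, List.getLast?_cons_cons] at hml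
          exact absurd (List.mem_of_getLast? hml) hyr'
      subst hr'
      refine (min_le_left _ _).trans (hchain.trans ?_)
      rw [chainStrength_cons_cons]
      exact (min_le_left _ _).trans (min_le_left _ _)
    · -- the path avoids the pair (x, xy); use strongness
      have hcong : (G.deletePair x y).chainStrength (x :: b :: r') =
          G.chainStrength (x :: b :: r') := by
        apply chainStrength_congr
        intro p hp
        rw [List.tail_cons, List.zip_cons_cons] at hp
        have hne1 : ¬(p.1 = x ∧ p.2 = y) := by
          rcases List.mem_cons.mp hp with rfl | hp
          · exact fun h => hby h.2
          · intro h
            exact hxnr (h.1 ▸ (List.of_mem_zip hp).1)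
        have hne2 : ¬(p.2 = x ∧ p.1 = y) := by
          rcases List.mem_cons.mp hp with rfl | hp
          · exact fun h => hxy h.2
          · intro h
            exact hxnr (h.1 ▸ List.mem_cons_of_mem _ (List.of_mem_zip hp).2)
        unfold pairMin
        rw [deletePair_eta, deletePair_eta, if_neg hne1, if_neg hne2]
      have hDyx : (G.deletePair x y).eta y x = G.eta y x := by
        rw [deletePair_eta, if_neg (fun h => hxy h.1.symm)]
      have hmem : min ((G.deletePair x y).chainStrength (x :: b :: r'))
          ((G.deletePair x y).eta y x) ∈ (G.deletePair x y).pathStrengths x x y :=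
        ⟨x :: b :: r', hnd, rfl, Or.inr ⟨hml, rfl⟩⟩
      have h1 := le_csSup (pathStrengths_bddAbove (G.deletePair x y) x x y) hmem
      have h2 : (G.deletePair x y).ICONN x x y ≤ G.eta x y := hG x y hpos
      calc min (G.chainStrength l) (G.eta y x)
          ≤ min (G.chainStrength (x :: b :: r')) (G.eta y x) :=
            min_le_min hchain (le_refl _)
        _ = min ((G.deletePair x y).chainStrength (x :: b :: r'))
            ((G.deletePair x y).eta y x) := by rw [hcong, hDyx]
        _ ≤ (G.deletePair x y).ICONN x x y := h1
        _ ≤ G.eta x y := h2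

/-! ### Properties of the Cartesian product -/

lemma cartesian_eta (G₁ : FIG V₁) (G₂ : FIG V₂) (p q : V₁ × V₂) :
    (G₁.cartesian G₂).eta p q =
      if p.1 = q.1 then
        (if 0 < G₂.eta p.2 q.2 ∧ 0 < G₂.eta q.2 p.2 then
          min (G₁.eps p.1) (G₂.eta p.2 q.2) else 0)
      else if p.2 = q.2 then
        (if 0 < G₁.eta p.1 q.1 ∧ 0 < G₁.eta q.1 p.1 then
          min (G₁.eta p.1 q.1) (G₂.eps p.2) else 0)
      else 0 := rfl

lemma cart_eta_le_eps1 (G₁ : FIG V₁) (G₂ : FIG V₂) (u v : V₁ × V₂) :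
    (G₁.cartesian G₂).eta u v ≤ G₁.eps u.1 := by
  rw [cartesian_eta]
  split
  · split
    · exact min_le_left _ _
    · exact G₁.eps_nonneg _
  · split
    · split
      · exact (min_le_left _ _).trans ((G₁.eta_le _ _).trans (min_le_left _ _))
      · exact G₁.eps_nonneg _
    · exact G₁.eps_nonneg _

lemma cart_eta_le_eps2 (G₁ : FIG V₁) (G₂ : FIG V₂) (u v : V₁ × V₂) :
    (G₁.cartesian G₂).eta u v ≤ G₂.eps u.2 := by
  rw [cartesian_eta]
  split
  · split
    · exact (min_le_right _ _).trans ((G₂.eta_le _ _).trans (min_le_left _ _))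
    · exact G₂.eps_nonneg _
  · split
    · split
      · exact min_le_right _ _
      · exact G₂.eps_nonneg _
    · exact G₂.eps_nonneg _

lemma cart_eta_le_eta2 (G₁ : FIG V₁) (G₂ : FIG V₂) {u v : V₁ × V₂} (h : u.2 ≠ v.2) :
    (G₁.cartesian G₂).eta u v ≤ G₂.eta u.2 v.2 := by
  rw [cartesian_eta]
  by_cases h1 : u.1 = v.1
  · rw [if_pos h1]
    split
    · exact min_le_right _ _
    · exact G₂.eta_nonneg _ _
  · rw [if_neg h1, if_neg h]
    exact G₂.eta_nonneg _ _

lemma cart_eta_le_eta1 (G₁ : FIG V₁) (G₂ : FIG V₂) {u v : V₁ × V₂} (h : u.1 ≠ v.1) :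
    (G₁.cartesian G₂).eta u v ≤ G₁.eta u.1 v.1 := by
  rw [cartesian_eta, if_neg h]
  split
  · split
    · exact min_le_left _ _
    · exact G₁.eta_nonneg _ _
  · exact G₁.eta_nonneg _ _

lemma cart_pairMin_le_pairMin2 (G₁ : FIG V₁) (G₂ : FIG V₂) {u v : V₁ × V₂}
    (h : u.2 ≠ v.2) :
    (G₁.cartesian G₂).pairMin u v ≤ G₂.pairMin u.2 v.2 :=
  min_le_min (cart_eta_le_eta2 G₁ G₂ h) (cart_eta_le_eta2 G₁ G₂ (Ne.symm h))

lemma cart_pairMin_le_pairMin1 (G₁ : FIG V₁) (G₂ : FIG V₂) {u v : V₁ × V₂}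
    (h : u.1 ≠ v.1) :
    (G₁.cartesian G₂).pairMin u v ≤ G₁.pairMin u.1 v.1 :=
  min_le_min (cart_eta_le_eta1 G₁ G₂ h) (cart_eta_le_eta1 G₁ G₂ (Ne.symm h))

/-- projection of a walk in the product onto the second factor (collapsing
steps that move in the first factor) -/
def proj2 : List (V₁ × V₂) → List V₂
  | [] => []
  | [p] => [p.2]
  | p :: q :: t => if p.2 = q.2 then proj2 (q :: t) else p.2 :: proj2 (q :: t)

lemma proj2_head : ∀ (p : V₁ × V₂) (t : List (V₁ × V₂)),
    (proj2 (p :: t)).head? = some p.2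
  | _, [] => rfl
  | p, q :: t => by
    by_cases h : p.2 = q.2
    · rw [show proj2 (p :: q :: t) = proj2 (q :: t) from by rw [proj2, if_pos h], proj2_head q t, h]
    · rw [show proj2 (p :: q :: t) = p.2 :: proj2 (q :: t) from by rw [proj2, if_neg h]]
      rfl

lemma proj2_last : ∀ l : List (V₁ × V₂), (proj2 l).getLast? = l.getLast?.map Prod.snd
  | [] => rfl
  | [p] => rfl
  | p :: q :: t => by
    rw [List.getLast?_cons_cons]
    by_cases h : p.2 = q.2
    · rw [show proj2 (p :: q :: t) = proj2 (q :: t) from by rw [proj2, if_pos h]]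
      exact proj2_last (q :: t)
    · rw [show proj2 (p :: q :: t) = p.2 :: proj2 (q :: t) from by rw [proj2, if_neg h]]
      obtain ⟨m, hm⟩ : ∃ m, proj2 (q :: t) = q.2 :: m := by
        have hh := proj2_head q t
        cases hq : proj2 (q :: t) with
        | nil => rw [hq] at hh; simp at hh
        | cons c m =>
          rw [hq] at hh
          simp only [List.head?_cons, Option.some.injEq] at hh
          exact ⟨m, by rw [hh]⟩
      rw [hm, List.getLast?_cons_cons, ← hm]
      exact proj2_last (q :: t)

lemma proj2_chain (G₁ : FIG V₁) (G₂ : FIG V₂) :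
    ∀ l : List (V₁ × V₂),
      (G₁.cartesian G₂).chainStrength l ≤ G₂.chainStrength (proj2 l)
  | [] => le_refl 1
  | [_] => le_refl 1
  | p :: q :: t => by
    have ih := proj2_chain G₁ G₂ (q :: t)
    by_cases h : p.2 = q.2
    · rw [show proj2 (p :: q :: t) = proj2 (q :: t) from by rw [proj2, if_pos h],
        chainStrength_cons_cons]
      exact (min_le_right _ _).trans ih
    · rw [show proj2 (p :: q :: t) = p.2 :: proj2 (q :: t) from by rw [proj2, if_neg h]]
      obtain ⟨m, hm⟩ : ∃ m, proj2 (q :: t) = q.2 :: m := by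
        have hh := proj2_head q t
        cases hq : proj2 (q :: t) with
        | nil => rw [hq] at hh; simp at hh
        | cons c m =>
          rw [hq] at hh
          simp only [List.head?_cons, Option.some.injEq] at hh
          exact ⟨m, by rw [hh]⟩
      rw [hm, chainStrength_cons_cons, chainStrength_cons_cons, ← hm]
      exact min_le_min (cart_pairMin_le_pairMin2 G₁ G₂ h) ih

/-- projection of a walk in the product onto the first factor -/
def proj1 : List (V₁ × V₂) → List V₁
  | [] => []
  | [p] => [p.1]
  | p :: q :: t => if p.1 = q.1 then proj1 (q :: t) else p.1 :: proj1 (q :: t)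

lemma proj1_head : ∀ (p : V₁ × V₂) (t : List (V₁ × V₂)),
    (proj1 (p :: t)).head? = some p.1
  | _, [] => rfl
  | p, q :: t => by
    by_cases h : p.1 = q.1
    · rw [show proj1 (p :: q :: t) = proj1 (q :: t) from by rw [proj1, if_pos h], proj1_head q t, h]
    · rw [show proj1 (p :: q :: t) = p.1 :: proj1 (q :: t) from by rw [proj1, if_neg h]]
      rfl

lemma proj1_last : ∀ l : List (V₁ × V₂), (proj1 l).getLast? = l.getLast?.map Prod.fst
  | [] => rfl
  | [p] => rfl
  | p :: q :: t => by
    rw [List.getLast?_cons_cons]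
    by_cases h : p.1 = q.1
    · rw [show proj1 (p :: q :: t) = proj1 (q :: t) from by rw [proj1, if_pos h]]
      exact proj1_last (q :: t)
    · rw [show proj1 (p :: q :: t) = p.1 :: proj1 (q :: t) from by rw [proj1, if_neg h]]
      obtain ⟨m, hm⟩ : ∃ m, proj1 (q :: t) = q.1 :: m := by
        have hh := proj1_head q t
        cases hq : proj1 (q :: t) with
        | nil => rw [hq] at hh; simp at hh
        | cons c m =>
          rw [hq] at hh
          simp only [List.head?_cons, Option.some.injEq] at hh
          exact ⟨m, by rw [hh]⟩
      rw [hm, List.getLast?_cons_cons, ← hm]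
      exact proj1_last (q :: t)

lemma proj1_chain (G₁ : FIG V₁) (G₂ : FIG V₂) :
    ∀ l : List (V₁ × V₂),
      (G₁.cartesian G₂).chainStrength l ≤ G₁.chainStrength (proj1 l)
  | [] => le_refl 1
  | [_] => le_refl 1
  | p :: q :: t => by
    have ih := proj1_chain G₁ G₂ (q :: t)
    by_cases h : p.1 = q.1
    · rw [show proj1 (p :: q :: t) = proj1 (q :: t) from by rw [proj1, if_pos h],
        chainStrength_cons_cons]
      exact (min_le_right _ _).trans ih
    · rw [show proj1 (p :: q :: t) = p.1 :: proj1 (q :: t) from by rw [proj1, if_neg h]]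
      obtain ⟨m, hm⟩ : ∃ m, proj1 (q :: t) = q.1 :: m := by
        have hh := proj1_head q t
        cases hq : proj1 (q :: t) with
        | nil => rw [hq] at hh; simp at hh
        | cons c m =>
          rw [hq] at hh
          simp only [List.head?_cons, Option.some.injEq] at hh
          exact ⟨m, by rw [hh]⟩
      rw [hm, chainStrength_cons_cons, chainStrength_cons_cons, ← hm]
      exact min_le_min (cart_pairMin_le_pairMin1 G₁ G₂ h) ih

/-- **Theorem 19.** The Cartesian product of two strong fuzzy incidence graphs is a
strong fuzzy incidence graph. -/
theorem cartesian_strong (G₁ : FIG V₁) (G₂ : FIG V₂)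
    (h₁ : G₁.Strong) (h₂ : G₂.Strong) : (G₁.cartesian G₂).Strong := by
  intro p q hpair
  have hppos : 0 < (G₁.cartesian G₂).eta p q := hpair
  have hpq : p ≠ q := by
    rintro rfl
    rw [eta_self] at hppos
    exact lt_irrefl 0 hppos
  unfold IsStrongPair ICONN
  apply Real.sSup_le _ (le_of_lt hppos)
  rintro s ⟨l, hnd, hh, (⟨hl, rfl⟩ | ⟨hl, rfl⟩)⟩
  · -- walk ends at p: the final pair is the deleted pair, which has weight 0
    have h0 : ((G₁.cartesian G₂).deletePair p q).eta p q = 0 := by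
      rw [deletePair_eta, if_pos ⟨rfl, rfl⟩]
    rw [h0]
    exact (min_le_right _ _).trans (le_of_lt hppos)
  · -- walk ends at q
    have hchain : ((G₁.cartesian G₂).deletePair p q).chainStrength l ≤
        (G₁.cartesian G₂).chainStrength l :=
      chainStrength_mono (deletePair_eta_le _ p q) l
    have hdqp : ((G₁.cartesian G₂).deletePair p q).eta q p =
        (G₁.cartesian G₂).eta q p := by
      rw [deletePair_eta, if_neg (fun h => hpq h.1.symm)]
    obtain ⟨t, rfl⟩ : ∃ t, l = p :: t := by
      cases l with
      | nil => simp at hh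
      | cons c t =>
        simp only [List.head?_cons, Option.some.injEq] at hh
        exact ⟨t, by rw [hh]⟩
    obtain ⟨v, t', rfl⟩ : ∃ v t', t = v :: t' := by
      cases t with
      | nil =>
        simp only [List.getLast?_singleton, Option.some.injEq] at hl
        exact absurd hl hpq
      | cons v t' => exact ⟨v, t', rfl⟩
    have hfirst : (G₁.cartesian G₂).chainStrength (p :: v :: t') ≤
        (G₁.cartesian G₂).eta p v := by
      rw [chainStrength_cons_cons]
      exact (min_le_left _ _).trans (min_le_left _ _)
    rw [hdqp]
    by_cases hc1 : p.1 = q.1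
    · have hp2 : p.2 ≠ q.2 := fun h => hpq (Prod.ext hc1 h)
      have hval : 0 < G₂.eta p.2 q.2 ∧
          (G₁.cartesian G₂).eta p q = min (G₁.eps p.1) (G₂.eta p.2 q.2) := by
        have h : 0 < (G₁.cartesian G₂).eta p q := hppos
        rw [cartesian_eta, if_pos hc1] at h
        by_cases hcond : 0 < G₂.eta p.2 q.2 ∧ 0 < G₂.eta q.2 p.2
        · exact ⟨hcond.1, by rw [cartesian_eta, if_pos hc1, if_pos hcond]⟩
        · rw [if_neg hcond] at h
          exact absurd h (lt_irrefl 0)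
      rw [hval.2]
      refine le_min ?_ ?_
      · exact (min_le_left _ _).trans
          (hchain.trans (hfirst.trans (cart_eta_le_eps1 G₁ G₂ p v)))
      · refine le_trans (min_le_min (hchain.trans (proj2_chain G₁ G₂ _))
          (cart_eta_le_eta2 G₁ G₂ (Ne.symm hp2))) ?_
        exact strength_le_eta G₂ h₂ hval.1 (proj2_head p (v :: t'))
          (by rw [proj2_last, hl]; rfl)
    · by_cases hc2 : p.2 = q.2
      · have hval : 0 < G₁.eta p.1 q.1 ∧
            (G₁.cartesian G₂).eta p q = min (G₁.eta p.1 q.1) (G₂.eps p.2) := by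
          have h : 0 < (G₁.cartesian G₂).eta p q := hppos
          rw [cartesian_eta, if_neg hc1, if_pos hc2] at h
          by_cases hcond : 0 < G₁.eta p.1 q.1 ∧ 0 < G₁.eta q.1 p.1
          · exact ⟨hcond.1, by rw [cartesian_eta, if_neg hc1, if_pos hc2, if_pos hcond]⟩
          · rw [if_neg hcond] at h
            exact absurd h (lt_irrefl 0)
        rw [hval.2]
        refine le_min ?_ ?_
        · refine le_trans (min_le_min (hchain.trans (proj1_chain G₁ G₂ _))
            (cart_eta_le_eta1 G₁ G₂ (Ne.symm hc1))) ?_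
          exact strength_le_eta G₁ h₁ hval.1 (proj1_head p (v :: t'))
            (by rw [proj1_last, hl]; rfl)
        · exact (min_le_left _ _).trans
            (hchain.trans (hfirst.trans (cart_eta_le_eps2 G₁ G₂ p v)))
      · exfalso
        have h : 0 < (G₁.cartesian G₂).eta p q := hppos
        rw [cartesian_eta, if_neg hc1, if_neg hc2] at h
        exact lt_irrefl 0 h


end FIG
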